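/- Let m : ℕ → ℕ be the function that interprets the binary representation of n as a base-4 number, i.e., m(0) = 0, m(2n) = 4·m(n), m(2n+1) = 4·m(n) + 1. Then for all n, (n² + 2n)/3 ≤ m(n) ≤ n², i.e., n² + 2n ≤ 3·m(n) and m(n) ≤ n². -/
import Mathlib


def m : ℕ → ℕ
  | 0 => 0
  | (n+1) => 4 * m ((n+1)/2) + (n+1) % 2
decreasing_by exact Nat.div_lt_self (Nat.succ_pos n) (by norm_num)

theorem stmt17 : ∀ n : ℕ, n^2 + 2*n ≤ 3 * m n ∧ m n ≤ n^2 := by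
  intro n
  induction n using Nat.strong_induction_on with
  | _ n ih =>
    match n with
    | 0 => simp [m]
    | (k+1) =>
      have hlt : (k+1)/2 < k+1 := Nat.div_lt_self (Nat.succ_pos k) (by norm_num)
      obtain ⟨h1, h2⟩ := ih _ hlt
      have hmk : m (k+1) = 4 * m ((k+1)/2) + (k+1) % 2 := by rw [m]
      set j := (k+1)/2 with hjdef
      have hj : k + 1 = 2 * j + (k+1) % 2 := (Nat.div_add_mod (k+1) 2).symm.trans (by ring)
      have hm2 : (k+1) % 2 = 0 ∨ (k+1) % 2 = 1 := Nat.mod_two_eq_zero_or_one _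
      rw [hmk]
      rcases hm2 with h | h <;> rw [h] at hj ⊢ <;>
        constructor <;> nlinarith [h1, h2, hj]
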